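/- Let p, m, n be natural numbers. For each k ∈ {1,…,p}, let the polytope S_k = {y ∈ ℝⁿ : C_k y ≤ c_k} be given by C_k ∈ ℝ^{q_k×n} and c_k ∈ ℝ^{q_k}, and let the affine piece be f_k(y) = A_k y + b_k with A_k ∈ ℝ^{m×n}, b_k ∈ ℝ^{m}. Assume consistency: for all k, j and all y ∈ S_k ∩ S_j, A_k y + b_k = A_j y + b_j (so the piecewise affine function f with f(y) = A_k y + b_k for y ∈ S_k is well defined on S = ∪_k S_k). For x ∈ ℝⁿ define δ_k(x) = ReLU( ∑_{i=1}^{q_k} BSF(−(C_k x)_i + (c_k)_i) − q_k + 1 ) and Y_k(x) = ReLU( δ_k(x) − ∑_{l < k} δ_l(x) ). Then for every x ∈ S and every j ∈ {1,…,m}: ∑_{k=1}^{p} Y_k(x) · (A_k x + b_k)_j = f(x)_j; that is, the multiplication-gated network (YANN-L) exactly represents f on its whole domain without any big-M constant. -/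

import Mathlib

/-- The binary step function: `1` if `t ≥ 0`, `0` otherwise. -/
noncomputable def BSF (t : ℝ) : ℝ := if 0 ≤ t then 1 else 0

/-- The rectified linear unit. -/
def ReLU (t : ℝ) : ℝ := max t 0

theorem yannL_exactly_represents_piecewise_affine (p m n : ℕ)
    (q : Fin p → ℕ)
    (C : ∀ k : Fin p, Matrix (Fin (q k)) (Fin n) ℝ)
    (c : ∀ k : Fin p, Fin (q k) → ℝ)
    (A : Fin p → Matrix (Fin m) (Fin n) ℝ) (b : Fin p → Fin m → ℝ)
    (S : Fin p → Set (Fin n → ℝ))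
    (hS : ∀ k, S k = {y : Fin n → ℝ | ∀ i, (C k).mulVec y i ≤ c k i})
    (hconsist : ∀ (k k' : Fin p), ∀ y ∈ S k ∩ S k',
      (A k).mulVec y + b k = (A k').mulVec y + b k')
    (δ : Fin p → (Fin n → ℝ) → ℝ)
    (hδ : ∀ k x, δ k x
      = ReLU (∑ i, BSF (-((C k).mulVec x i) + c k i) - (q k : ℝ) + 1))
    (Y : Fin p → (Fin n → ℝ) → ℝ)
    (hY : ∀ k x, Y k x = ReLU (δ k x - ∑ l ∈ Finset.Iio k, δ l x)) :
    ∀ x ∈ ⋃ k : Fin p, S k, ∀ (j : Fin m) (k : Fin p), x ∈ S k →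
      ∑ k', Y k' x * ((A k').mulVec x j + b k' j)
        = (A k).mulVec x j + b k j := by
  intro x hx j k hxk
  classical
  have hBSF : ∀ (k : Fin p) (i : Fin (q k)), BSF (-((C k).mulVec x i) + c k i)
      = if (C k).mulVec x i ≤ c k i then (1:ℝ) else 0 := by
    intro k i
    by_cases h : (C k).mulVec x i ≤ c k i
    · rw [if_pos h]; unfold BSF; rw [if_pos (by linarith)]
    · rw [if_neg h]; unfold BSF
      rw [if_neg (by push_neg at h ⊢; linarith)]
  have hsum : ∀ k : Fin p, ∑ i, BSF (-((C k).mulVec x i) + c k i)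
      = ((Finset.univ.filter (fun i => (C k).mulVec x i ≤ c k i)).card : ℝ) := by
    intro k
    simp only [hBSF]
    rw [Finset.sum_boole]
  -- δ is the indicator of S k
  have hδ1 : ∀ k : Fin p, x ∈ S k → δ k x = 1 := by
    intro k hk
    rw [hS k] at hk
    have hfilt : Finset.univ.filter (fun i => (C k).mulVec x i ≤ c k i)
        = (Finset.univ : Finset (Fin (q k))) := by
      apply Finset.filter_true_of_mem
      intro i _; exact hk i
    rw [hδ, hsum, hfilt]
    simp [ReLU]
  have hδ0 : ∀ k : Fin p, x ∉ S k → δ k x = 0 := by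
    intro k hk
    rw [hS k] at hk
    simp only [Set.mem_setOf_eq] at hk
    push_neg at hk
    obtain ⟨i, hi⟩ := hk
    have hcard : (Finset.univ.filter (fun i => (C k).mulVec x i ≤ c k i)).card < q k := by
      have : (Finset.univ.filter (fun i => (C k).mulVec x i ≤ c k i)) ≠ Finset.univ := by
        intro h
        have := Finset.mem_filter.mp (h ▸ Finset.mem_univ i)
        exact absurd this.2 (not_le.mpr hi)
      have h1 := Finset.card_lt_card (Finset.ssubset_univ_iff.mpr this)
      simpa using h1
    rw [hδ, hsum]
    have : ((Finset.univ.filter (fun i => (C k).mulVec x i ≤ c k i)).card : ℝ) + 1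
        ≤ (q k : ℝ) := by exact_mod_cast hcard
    unfold ReLU
    apply max_eq_right
    linarith
  have hδnn : ∀ k : Fin p, 0 ≤ δ k x := by
    intro k; rw [hδ]; exact le_max_right _ _
  have hδle1 : ∀ k : Fin p, δ k x ≤ 1 := by
    intro k
    by_cases h : x ∈ S k
    · exact (hδ1 k h).le
    · rw [hδ0 k h]; norm_num
  -- minimal index k0 with x ∈ S k0
  obtain ⟨_, ⟨k1, rfl⟩, hk1⟩ := hx
  have hne : (Finset.univ.filter (fun k => x ∈ S k)).Nonempty :=
    ⟨k1, Finset.mem_filter.mpr ⟨Finset.mem_univ _, hk1⟩⟩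
  set k0 := (Finset.univ.filter (fun k => x ∈ S k)).min' hne with hk0def
  have hk0S : x ∈ S k0 :=
    (Finset.mem_filter.mp ((Finset.univ.filter (fun k => x ∈ S k)).min'_mem hne)).2
  have hk0min : ∀ l : Fin p, l < k0 → x ∉ S l := by
    intro l hl hlS
    exact absurd (Finset.min'_le _ l (Finset.mem_filter.mpr ⟨Finset.mem_univ _, hlS⟩))
      (not_le.mpr hl)
  -- Y characterization
  have hYval : ∀ k' : Fin p, Y k' x = if k' = k0 then 1 else 0 := by
    intro k'
    rcases lt_trichotomy k' k0 with h | h | h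
    · rw [if_neg h.ne, hY, hδ0 k' (hk0min k' h)]
      have hsum0 : ∑ l ∈ Finset.Iio k', δ l x = 0 := by
        apply Finset.sum_eq_zero
        intro l hl
        exact hδ0 l (hk0min l ((Finset.mem_Iio.mp hl).trans h))
      rw [hsum0]
      simp [ReLU]
    · rw [if_pos h, hY, h, hδ1 k0 hk0S]
      have hsum0 : ∑ l ∈ Finset.Iio k0, δ l x = 0 := by
        apply Finset.sum_eq_zero
        intro l hl
        exact hδ0 l (hk0min l (Finset.mem_Iio.mp hl))
      rw [hsum0]
      simp [ReLU]
    · rw [if_neg (ne_of_gt h), hY]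
      have h1 : (1:ℝ) ≤ ∑ l ∈ Finset.Iio k', δ l x := by
        have h2 := Finset.single_le_sum (f := fun l => δ l x)
          (fun l _ => hδnn l) (Finset.mem_Iio.mpr h)
        simpa [hδ1 k0 hk0S] using h2
      unfold ReLU
      apply max_eq_right
      have := hδle1 k'
      linarith
  have hsumY : ∑ k', Y k' x * ((A k').mulVec x j + b k' j)
      = (A k0).mulVec x j + b k0 j := by
    rw [Finset.sum_eq_single k0]
    · rw [hYval k0, if_pos rfl, one_mul]
    · intro l _ hl
      rw [hYval l, if_neg hl, zero_mul]
    · intro h; exact absurd (Finset.mem_univ k0) h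
  rw [hsumY]
  have := hconsist k0 k x ⟨hk0S, hxk⟩
  exact congrFun this j
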